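/- Let r > 0, A ∈ ℝ^{n×n}, B ∈ ℝ^{n×m}, k ∈ ℝ^{m×n}. There exist constants M, L > 0 (depending only on A, B, k, r) such that for every ε ∈ (0, r], every measurable d : [0,∞) → [−1,1], every x₀ ∈ ℝⁿ and every continuous u₀ : [−r−ε,0] → ℝᵐ with u₀(0) = k e^{Ar} x₀ + k ∫_{−r}^{0} e^{−As} B u₀(s) ds, every solution (x, u) of the closed-loop system with initial conditions x(0) = x₀ and u = u₀ on [−r−ε,0] satisfies the exponential growth estimate |x(t)| + |u(t)| ≤ M e^{Lt} (|x₀| + max_{−r−ε ≤ s ≤ 0} |u₀(s)|) for all t ≥ 0. -/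

import Mathlib

open MeasureTheory

/-- Matrix-vector multiplication between Euclidean spaces. -/
noncomputable def mv {n m : ℕ} (A : Matrix (Fin n) (Fin m) ℝ)
    (x : EuclideanSpace ℝ (Fin m)) : EuclideanSpace ℝ (Fin n) :=
  Matrix.toEuclideanLin A x

/-- `mexp A t = exp (t A)`, the matrix exponential. -/
noncomputable def mexp {n : ℕ} (A : Matrix (Fin n) (Fin n) ℝ) (t : ℝ) :
    Matrix (Fin n) (Fin n) ℝ :=
  NormedSpace.exp (t • A)

/-- The continuous linear map associated to a matrix. -/
noncomputable def mclm {p q : ℕ} (M : Matrix (Fin p) (Fin q) ℝ) :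
    EuclideanSpace ℝ (Fin q) →L[ℝ] EuclideanSpace ℝ (Fin p) :=
  LinearMap.toContinuousLinearMap (Matrix.toEuclideanLin M)

lemma mclm_apply {p q : ℕ} (M : Matrix (Fin p) (Fin q) ℝ) (v : EuclideanSpace ℝ (Fin q)) :
    mclm M v = mv M v := rfl

/-- Operator norm bound for a matrix. -/
noncomputable def opb {p q : ℕ} (M : Matrix (Fin p) (Fin q) ℝ) : ℝ := ‖mclm M‖

lemma opb_nonneg {p q : ℕ} (M : Matrix (Fin p) (Fin q) ℝ) : 0 ≤ opb M := norm_nonneg _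

lemma norm_mv_le {p q : ℕ} (M : Matrix (Fin p) (Fin q) ℝ) (v : EuclideanSpace ℝ (Fin q)) :
    ‖mv M v‖ ≤ opb M * ‖v‖ := by
  rw [← mclm_apply]; exact (mclm M).le_opNorm v

lemma continuous_mv {p q : ℕ} (M : Matrix (Fin p) (Fin q) ℝ) :
    Continuous fun v => mv M v := by
  have := (mclm M).continuous
  exact this

lemma continuous_mclm {p q : ℕ} : Continuous fun M : Matrix (Fin p) (Fin q) ℝ => mclm M := by
  have h := LinearMap.continuous_of_finiteDimensional
    (𝕜 := ℝ)
    ((Matrix.toEuclideanLin.trans LinearMap.toContinuousLinearMap :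
      Matrix (Fin p) (Fin q) ℝ ≃ₗ[ℝ]
        (EuclideanSpace ℝ (Fin q) →L[ℝ] EuclideanSpace ℝ (Fin p))).toLinearMap)
  exact h

lemma continuous_mexp {n : ℕ} (A : Matrix (Fin n) (Fin n) ℝ) :
    Continuous fun τ : ℝ => mexp A τ := by
  letI := Matrix.instL2OpNormedRing (n := Fin n) (𝕜 := ℝ)
  letI := Matrix.instL2OpNormedAlgebra (n := Fin n) (𝕜 := ℝ)
  haveI : CompleteSpace (Matrix (Fin n) (Fin n) ℝ) := FiniteDimensional.complete ℝ _
  letI : NormedAlgebra ℚ (Matrix (Fin n) (Fin n) ℝ) := NormedAlgebra.restrictScalars ℚ ℝ _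
  exact (NormedSpace.exp_continuous (𝔸 := Matrix (Fin n) (Fin n) ℝ)).comp (continuous_id.smul continuous_const)

lemma exists_expBound (n : ℕ) (A : Matrix (Fin n) (Fin n) ℝ) (r : ℝ) :
    ∃ E : ℝ, 0 ≤ E ∧ ∀ τ ∈ Set.Icc (0:ℝ) r, opb (mexp A τ) ≤ E := by
  have hc : ContinuousOn (fun τ : ℝ => opb (mexp A τ)) (Set.Icc 0 r) :=
    (continuous_norm.comp (continuous_mclm.comp (continuous_mexp A))).continuousOn
  obtain ⟨C, hC⟩ := IsCompact.exists_bound_of_continuousOn isCompact_Icc hc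
  refine ⟨max C 0, le_max_right _ _, fun τ hτ => ?_⟩
  exact le_trans (le_trans (le_abs_self _) (hC τ hτ)) (le_max_left _ _)
set_option maxHeartbeats 2000000 in
theorem stmt_6 (n m : ℕ) (A : Matrix (Fin n) (Fin n) ℝ)
    (B : Matrix (Fin n) (Fin m) ℝ) (k : Matrix (Fin m) (Fin n) ℝ)
    (r : ℝ) (hr : 0 < r) :
    ∃ M L : ℝ, 0 < M ∧ 0 < L ∧
      ∀ ε : ℝ, ε ∈ Set.Ioc 0 r →
        ∀ (d : ℝ → ℝ), Measurable d → (∀ t, 0 ≤ t → d t ∈ Set.Icc (-1 : ℝ) 1) →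
          ∀ (x₀ : EuclideanSpace ℝ (Fin n)) (u₀ : ℝ → EuclideanSpace ℝ (Fin m)),
            ContinuousOn u₀ (Set.Icc (-(r + ε)) 0) →
            u₀ 0 = mv k (mv (mexp A r) x₀) +
              mv k (∫ s in (-r : ℝ)..0, mv (mexp A (-s)) (mv B (u₀ s))) →
            ∀ (x : ℝ → EuclideanSpace ℝ (Fin n)) (u : ℝ → EuclideanSpace ℝ (Fin m)),
              ContinuousOn x (Set.Ici 0) →
              ContinuousOn u (Set.Ici (-(r + ε))) →
              x 0 = x₀ → (∀ t ∈ Set.Icc (-(r + ε)) (0 : ℝ), u t = u₀ t) →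
              (∀ t : ℝ, 0 ≤ t →
                x t = x 0 + ∫ s in (0 : ℝ)..t,
                  (mv A (x s) + mv B (u (s - r - ε * d s)))) →
              (∀ t : ℝ, 0 ≤ t →
                u t = mv k (mv (mexp A r) (x t)) +
                  mv k (∫ s in t..(t + r),
                    mv (mexp A (t + r - s)) (mv B (u (s - r))))) →
              ∀ t : ℝ, 0 ≤ t →
                ‖x t‖ + ‖u t‖ ≤ M * Real.exp (L * t) *
                  (‖x₀‖ + sSup ((fun s => ‖u₀ s‖) '' Set.Icc (-(r + ε)) 0)) := by
  classical
  obtain ⟨E, hE0, hE⟩ := exists_expBound n A r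
  set cA := opb A with hcAdef
  set cB := opb B with hcBdef
  set ck := opb k with hckdef
  set cR := opb (mexp A r) with hcRdef
  have hcA0 : 0 ≤ cA := opb_nonneg A
  have hcB0 : 0 ≤ cB := opb_nonneg B
  have hck0 : 0 ≤ ck := opb_nonneg k
  have hcR0 : 0 ≤ cR := opb_nonneg _
  set C0 : ℝ := (1 + ck * cR) * (1 + cA + cB) + ck * (E * cB) * r + 1 with hC0def
  set C1 : ℝ := (1 + ck * cR) * (cA + cB) + ck * (E * cB) + 1 with hC1def
  have hC0two : 2 ≤ C0 := by
    rw [hC0def]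
    nlinarith [mul_nonneg hck0 hcR0, add_nonneg hcA0 hcB0,
      mul_nonneg (mul_nonneg hck0 (mul_nonneg hE0 hcB0)) hr.le,
      mul_nonneg (mul_nonneg hck0 hcR0) (add_nonneg hcA0 hcB0)]
  have hC1pos : 0 < C1 := by
    rw [hC1def]
    nlinarith [mul_nonneg (mul_nonneg hck0 hcR0) (add_nonneg hcA0 hcB0),
      add_nonneg hcA0 hcB0, mul_nonneg hck0 (mul_nonneg hE0 hcB0)]
  set δ : ℝ := min r (min 1 (1 / (2 * C1))) with hδdef
  have hδpos : 0 < δ := lt_min hr (lt_min one_pos (by positivity))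
  have hδr : δ ≤ r := min_le_left _ _
  have hδ1 : δ ≤ 1 := le_trans (min_le_right _ _) (min_le_left _ _)
  have hδC1 : C1 * δ ≤ 1 / 2 := by
    have hδle : δ ≤ 1 / (2 * C1) := le_trans (min_le_right _ _) (min_le_right _ _)
    calc C1 * δ ≤ C1 * (1 / (2 * C1)) := mul_le_mul_of_nonneg_left hδle hC1pos.le
      _ = 1 / 2 := by field_simp
  set K : ℝ := 2 * C0 with hKdef
  have hK2 : 2 ≤ K := by rw [hKdef]; linarith
  have hK1 : 1 < K := by linarith
  have hKpos : 0 < K := by linarith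
  clear_value K δ C1 C0
  refine ⟨2 * K, Real.log K / δ, by linarith, div_pos (Real.log_pos hK1) hδpos, ?_⟩
  rintro ε ⟨hε0, hεr⟩ d hdm hd1 x₀ u₀ hu₀c hu₀eq x u hx hu hx0 huinit hxeq hueq
  have hrε0 : 0 < r + ε := by linarith
  set U₀ := sSup ((fun s => ‖u₀ s‖) '' Set.Icc (-(r + ε)) 0) with hU₀def
  have hmem0 : (0:ℝ) ∈ Set.Icc (-(r+ε)) 0 := ⟨by linarith, le_refl 0⟩
  have hbddU : BddAbove ((fun s => ‖u₀ s‖) '' Set.Icc (-(r + ε)) 0) :=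
    (isCompact_Icc.image_of_continuousOn hu₀c.norm).bddAbove
  have hU₀ : ∀ s ∈ Set.Icc (-(r+ε)) 0, ‖u₀ s‖ ≤ U₀ := fun s hs =>
    le_csSup hbddU (Set.mem_image_of_mem _ hs)
  have hU₀0 : 0 ≤ U₀ := le_trans (norm_nonneg _) (hU₀ 0 hmem0)
  set S := ‖x₀‖ + U₀ with hSdef
  have hS0 : 0 ≤ S := add_nonneg (norm_nonneg _) hU₀0
  have huS : ∀ s ∈ Set.Icc (-(r+ε)) 0, ‖u s‖ ≤ S := fun s hs => by
    rw [huinit s hs]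
    exact le_trans (hU₀ s hs) (by rw [hSdef]; linarith [norm_nonneg x₀])
  set v : ℝ → EuclideanSpace ℝ (Fin m) := fun s => u (max s (-(r+ε))) with hvdef
  have hvc : Continuous v :=
    hu.comp_continuous (continuous_id.max continuous_const) (fun s => Set.mem_Ici.mpr (le_max_right _ _))
  have hveq : ∀ s : ℝ, -(r+ε) ≤ s → v s = u s := fun s hs => by
    simp only [hvdef]; rw [max_eq_left hs]
  set f : ℝ → EuclideanSpace ℝ (Fin n) :=
    fun s => mv A (x s) + mv B (u (s - r - ε * d s)) with hfdef
  have harg : ∀ s : ℝ, 0 ≤ s → -(r+ε) ≤ s - r - ε * d s ∧ s - r - ε * d s ≤ s := by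
    intro s hs
    have h1 := (hd1 s hs).1
    have h2 := (hd1 s hs).2
    have e1 : ε * d s ≤ ε * 1 := mul_le_mul_of_nonneg_left h2 hε0.le
    have e2 : ε * (-1) ≤ ε * d s := mul_le_mul_of_nonneg_left h1 hε0.le
    constructor <;> linarith
  have hf_int : ∀ T : ℝ, 0 ≤ T → IntervalIntegrable f volume 0 T := by
    intro T hT
    rw [intervalIntegrable_iff_integrableOn_Ioc_of_le hT]
    have h1 : IntegrableOn (fun s => mv A (x s)) (Set.Ioc 0 T) := by
      have hc : ContinuousOn (fun s => mv A (x s)) (Set.Icc 0 T) :=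
        (continuous_mv A).comp_continuousOn (hx.mono Set.Icc_subset_Ici_self)
      exact hc.integrableOn_Icc.mono_set Set.Ioc_subset_Icc_self
    have h2 : IntegrableOn (fun s => mv B (u (s - r - ε * d s))) (Set.Ioc 0 T) := by
      have hmeasarg : Measurable fun s : ℝ => s - r - ε * d s :=
        (measurable_id.sub measurable_const).sub (hdm.const_mul ε)
      obtain ⟨C, hC⟩ := IsCompact.exists_bound_of_continuousOn
        (isCompact_Icc (a := -(r+ε)) (b := T)) hvc.continuousOn
      have hvers : IntegrableOn (fun s => mv B (v (s - r - ε * d s))) (Set.Ioc 0 T) := by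
        refine Integrable.mono' (integrable_const (opb B * C)) ?_ ?_
        · exact (((continuous_mv B).comp hvc).measurable.comp hmeasarg).aestronglyMeasurable
        · refine (ae_restrict_iff' measurableSet_Ioc).mpr (ae_of_all _ fun s hs => ?_)
          have hs0 : 0 ≤ s := le_of_lt hs.1
          obtain ⟨hl, hru⟩ := harg s hs0
          have hmem : s - r - ε * d s ∈ Set.Icc (-(r+ε)) T := ⟨hl, le_trans hru hs.2⟩
          calc ‖mv B (v (s - r - ε * d s))‖ ≤ opb B * ‖v (s - r - ε * d s)‖ := norm_mv_le _ _
            _ ≤ opb B * C := mul_le_mul_of_nonneg_left (hC _ hmem) (opb_nonneg B)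
      refine hvers.congr ?_
      refine (ae_restrict_iff' measurableSet_Ioc).mpr (ae_of_all _ fun s hs => ?_)
      show mv B (v (s - r - ε * d s)) = mv B (u (s - r - ε * d s))
      rw [hveq _ (harg s (le_of_lt hs.1)).1]
    exact h1.add h2
  have hxstep : ∀ t₀ t' : ℝ, 0 ≤ t₀ → t₀ ≤ t' → x t' = x t₀ + ∫ s in t₀..t', f s := by
    intro t₀ t' h0 h01
    have hT : 0 ≤ t' := le_trans h0 h01
    have hsub : Set.uIcc t₀ t' ⊆ Set.uIcc 0 t' := by
      rw [Set.uIcc_of_le h01, Set.uIcc_of_le hT]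
      exact Set.Icc_subset_Icc h0 le_rfl
    have hsplit : (∫ s in (0:ℝ)..t₀, f s) + ∫ s in t₀..t', f s = ∫ s in (0:ℝ)..t', f s :=
      intervalIntegral.integral_add_adjacent_intervals (hf_int t₀ h0)
        ((hf_int t' hT).mono_set hsub)
    rw [hxeq t' hT, ← hsplit, ← add_assoc, ← hxeq t₀ h0]
  -- main induction
  have key : ∀ j : ℕ,
      (∀ s : ℝ, -(r+ε) ≤ s → s ≤ (j:ℝ) * δ → ‖u s‖ ≤ K ^ j * S) ∧
      (∀ s : ℝ, 0 ≤ s → s ≤ (j:ℝ) * δ → ‖x s‖ ≤ K ^ j * S) := by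
    intro j
    induction j with
    | zero =>
      constructor
      · intro s hs1 hs2
        have hs0 : s ≤ 0 := by simpa using hs2
        rw [pow_zero, one_mul]
        exact huS s ⟨hs1, hs0⟩
      · intro s hs1 hs2
        have hs0 : s ≤ 0 := by simpa using hs2
        have : s = 0 := le_antisymm hs0 hs1
        subst this
        rw [pow_zero, one_mul, hx0, hSdef]
        linarith [hU₀0]
    | succ j ih =>
      set t₀ : ℝ := (j:ℝ) * δ with ht₀def
      have ht₀0 : 0 ≤ t₀ := mul_nonneg (Nat.cast_nonneg j) hδpos.le
      set t₁ : ℝ := t₀ + δ with ht₁def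
      have hcast : ((j+1:ℕ):ℝ) * δ = t₁ := by push_cast; rw [ht₁def, ht₀def]; ring
      set mm : ℝ := K ^ j * S with hmmdef
      have hm0 : 0 ≤ mm := mul_nonneg (pow_nonneg hKpos.le j) hS0
      have hsub1 : Set.Icc t₀ t₁ ⊆ Set.Ici (0:ℝ) := fun s hs => le_trans ht₀0 hs.1
      have hsub2 : Set.Icc t₀ t₁ ⊆ Set.Ici (-(r+ε)) := fun s hs =>
        le_trans (by linarith) hs.1
      have hbdd : BddAbove ((fun s => ‖x s‖ + ‖u s‖) '' Set.Icc t₀ t₁) :=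
        (isCompact_Icc.image_of_continuousOn
          (((hx.mono hsub1).norm).add ((hu.mono hsub2).norm))).bddAbove
      set Q : ℝ := sSup ((fun s => ‖x s‖ + ‖u s‖) '' Set.Icc t₀ t₁) with hQdef
      have hQb : ∀ s ∈ Set.Icc t₀ t₁, ‖x s‖ + ‖u s‖ ≤ Q := fun s hs =>
        le_csSup hbdd (Set.mem_image_of_mem _ hs)
      have ht₀mem : t₀ ∈ Set.Icc t₀ t₁ := ⟨le_rfl, by linarith⟩
      have hQ0 : 0 ≤ Q :=
        le_trans (add_nonneg (norm_nonneg _) (norm_nonneg _)) (hQb t₀ ht₀mem)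
      have hQxb : ∀ s ∈ Set.Icc t₀ t₁, ‖x s‖ ≤ Q := fun s hs =>
        le_trans (le_add_of_nonneg_right (norm_nonneg _)) (hQb s hs)
      have hQub : ∀ s ∈ Set.Icc t₀ t₁, ‖u s‖ ≤ Q := fun s hs =>
        le_trans (le_add_of_nonneg_left (norm_nonneg _)) (hQb s hs)
      have hUB : ∀ θ : ℝ, -(r+ε) ≤ θ → θ ≤ t₁ → ‖u θ‖ ≤ mm + Q := by
        intro θ h1 h2
        by_cases hc : θ ≤ t₀
        · exact le_trans (ih.1 θ h1 hc) (by linarith)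
        · push_neg at hc
          exact le_trans (hQub θ ⟨hc.le, h2⟩) (by linarith)
      have hXB : ∀ θ : ℝ, 0 ≤ θ → θ ≤ t₁ → ‖x θ‖ ≤ mm + Q := by
        intro θ h1 h2
        by_cases hc : θ ≤ t₀
        · exact le_trans (ih.2 θ h1 hc) (by linarith)
        · push_neg at hc
          exact le_trans (hQxb θ ⟨hc.le, h2⟩) (by linarith)
      have claimA : ∀ t ∈ Set.Icc t₀ t₁, ‖x t‖ ≤ mm + (cA+cB)*(mm+Q)*δ := by
        rintro t ⟨htl, htu⟩
        have hxt := hxstep t₀ t ht₀0 htl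
        have hbound : ∀ s ∈ Set.uIoc t₀ t, ‖f s‖ ≤ (cA+cB)*(mm+Q) := by
          intro s hs
          rw [Set.uIoc_of_le htl] at hs
          have hs0 : 0 ≤ s := le_trans ht₀0 hs.1.le
          obtain ⟨hl, hrr⟩ := harg s hs0
          have h1 : ‖mv A (x s)‖ ≤ cA * (mm+Q) :=
            le_trans (norm_mv_le _ _)
              (mul_le_mul_of_nonneg_left (hXB s hs0 (le_trans hs.2 htu)) hcA0)
          have h2 : ‖mv B (u (s - r - ε * d s))‖ ≤ cB * (mm+Q) :=
            le_trans (norm_mv_le _ _)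
              (mul_le_mul_of_nonneg_left
                (hUB _ hl (by linarith [hs.2])) hcB0)
          calc ‖f s‖ ≤ ‖mv A (x s)‖ + ‖mv B (u (s - r - ε * d s))‖ := norm_add_le _ _
            _ ≤ (cA+cB)*(mm+Q) := by rw [add_mul]; exact add_le_add h1 h2
        have hnorm := intervalIntegral.norm_integral_le_of_norm_le_const hbound
        have habs : |t - t₀| ≤ δ := by
          rw [abs_of_nonneg (by linarith)]; linarith
        have hxt₀ : ‖x t₀‖ ≤ mm := ih.2 t₀ ht₀0 le_rfl
        have hstep2 : (cA+cB)*(mm+Q) * |t - t₀| ≤ (cA+cB)*(mm+Q)*δ :=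
          mul_le_mul_of_nonneg_left habs
            (mul_nonneg (add_nonneg hcA0 hcB0) (add_nonneg hm0 hQ0))
        calc ‖x t‖ = ‖x t₀ + ∫ s in t₀..t, f s‖ := by rw [← hxt]
          _ ≤ ‖x t₀‖ + ‖∫ s in t₀..t, f s‖ := norm_add_le _ _
          _ ≤ mm + (cA+cB)*(mm+Q)*δ := add_le_add hxt₀ (le_trans hnorm hstep2)
      have claimB : ∀ t ∈ Set.Icc t₀ t₁,
          ‖u t‖ ≤ ck * (cR * ‖x t‖) + ck * (E*(cB*mm)*r + E*(cB*Q)*δ) := by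
        rintro t ⟨htl, htu⟩
        have ht0 : 0 ≤ t := le_trans ht₀0 htl
        have httr : t ≤ t₀ + r := by linarith
        have hg2c : ContinuousOn (fun s => mv (mexp A (t + r - s)) (mv B (u (s - r))))
            (Set.Icc t (t+r)) := by
          have hmat : Continuous fun s : ℝ => mclm (mexp A (t + r - s)) :=
            continuous_mclm.comp ((continuous_mexp A).comp (continuous_const.sub continuous_id))
          have hvecc : ContinuousOn (fun s : ℝ => mv B (u (s - r))) (Set.Icc t (t+r)) := by
            apply (continuous_mv B).comp_continuousOn
            apply hu.comp (continuous_id.sub continuous_const).continuousOn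
            intro s hs
            simp only [Set.mem_Ici]
            have := hs.1
            simp only [Pi.sub_apply, id_eq]
            linarith
          have := hmat.continuousOn.clm_apply hvecc
          simpa only [mclm_apply] using this
        have hint1 : IntervalIntegrable (fun s => mv (mexp A (t + r - s)) (mv B (u (s - r))))
            volume t (t₀ + r) := by
          apply ContinuousOn.intervalIntegrable
          apply hg2c.mono
          rw [Set.uIcc_of_le httr]
          exact Set.Icc_subset_Icc le_rfl (by linarith)
        have hint2 : IntervalIntegrable (fun s => mv (mexp A (t + r - s)) (mv B (u (s - r))))
            volume (t₀ + r) (t + r) := by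
          apply ContinuousOn.intervalIntegrable
          apply hg2c.mono
          rw [Set.uIcc_of_le (by linarith : t₀ + r ≤ t + r)]
          exact Set.Icc_subset_Icc (by linarith) le_rfl
        have hsp : (∫ s in t..(t+r), mv (mexp A (t + r - s)) (mv B (u (s - r))))
            = (∫ s in t..(t₀+r), mv (mexp A (t + r - s)) (mv B (u (s - r))))
              + ∫ s in (t₀+r)..(t+r), mv (mexp A (t + r - s)) (mv B (u (s - r))) :=
          (intervalIntegral.integral_add_adjacent_intervals hint1 hint2).symm
        have hub1 : ‖∫ s in t..(t₀+r), mv (mexp A (t + r - s)) (mv B (u (s - r)))‖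
            ≤ E*(cB*mm)*r := by
          have hb : ∀ s ∈ Set.uIoc t (t₀+r),
              ‖mv (mexp A (t + r - s)) (mv B (u (s - r)))‖ ≤ E*(cB*mm) := by
            intro s hs
            rw [Set.uIoc_of_le httr] at hs
            have hτ : t + r - s ∈ Set.Icc (0:ℝ) r := ⟨by linarith [hs.2], by linarith [hs.1]⟩
            have hum : ‖u (s - r)‖ ≤ mm :=
              ih.1 (s - r) (by linarith [hs.1]) (by linarith [hs.2])
            calc ‖mv (mexp A (t+r-s)) (mv B (u (s-r)))‖
                ≤ opb (mexp A (t+r-s)) * ‖mv B (u (s-r))‖ := norm_mv_le _ _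
              _ ≤ E * ‖mv B (u (s-r))‖ :=
                  mul_le_mul_of_nonneg_right (hE _ hτ) (norm_nonneg _)
              _ ≤ E * (cB * ‖u (s-r)‖) :=
                  mul_le_mul_of_nonneg_left (norm_mv_le _ _) hE0
              _ ≤ E * (cB * mm) :=
                  mul_le_mul_of_nonneg_left (mul_le_mul_of_nonneg_left hum hcB0) hE0
          have h := intervalIntegral.norm_integral_le_of_norm_le_const hb
          have habs : |t₀ + r - t| ≤ r := by
            rw [abs_of_nonneg (by linarith)]; linarith
          exact le_trans h (mul_le_mul_of_nonneg_left habs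
            (mul_nonneg hE0 (mul_nonneg hcB0 hm0)))
        have hub2 : ‖∫ s in (t₀+r)..(t+r), mv (mexp A (t + r - s)) (mv B (u (s - r)))‖
            ≤ E*(cB*Q)*δ := by
          have hb : ∀ s ∈ Set.uIoc (t₀+r) (t+r),
              ‖mv (mexp A (t + r - s)) (mv B (u (s - r)))‖ ≤ E*(cB*Q) := by
            intro s hs
            rw [Set.uIoc_of_le (by linarith : t₀ + r ≤ t + r)] at hs
            have hτ : t + r - s ∈ Set.Icc (0:ℝ) r := ⟨by linarith [hs.2], by linarith [hs.1]⟩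
            have hum : ‖u (s - r)‖ ≤ Q :=
              hQub (s - r) ⟨by linarith [hs.1], by linarith [hs.2]⟩
            calc ‖mv (mexp A (t+r-s)) (mv B (u (s-r)))‖
                ≤ opb (mexp A (t+r-s)) * ‖mv B (u (s-r))‖ := norm_mv_le _ _
              _ ≤ E * ‖mv B (u (s-r))‖ :=
                  mul_le_mul_of_nonneg_right (hE _ hτ) (norm_nonneg _)
              _ ≤ E * (cB * ‖u (s-r)‖) :=
                  mul_le_mul_of_nonneg_left (norm_mv_le _ _) hE0
              _ ≤ E * (cB * Q) :=
                  mul_le_mul_of_nonneg_left (mul_le_mul_of_nonneg_left hum hcB0) hE0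
          have h := intervalIntegral.norm_integral_le_of_norm_le_const hb
          have habs : |t + r - (t₀ + r)| ≤ δ := by
            rw [abs_of_nonneg (by linarith)]; linarith
          exact le_trans h (mul_le_mul_of_nonneg_left habs
            (mul_nonneg hE0 (mul_nonneg hcB0 hQ0)))
        rw [hueq t ht0, hsp]
        calc ‖mv k (mv (mexp A r) (x t)) +
              mv k ((∫ s in t..(t₀+r), mv (mexp A (t + r - s)) (mv B (u (s - r))))
                + ∫ s in (t₀+r)..(t+r), mv (mexp A (t + r - s)) (mv B (u (s - r))))‖
            ≤ ‖mv k (mv (mexp A r) (x t))‖ +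
              ‖mv k ((∫ s in t..(t₀+r), mv (mexp A (t + r - s)) (mv B (u (s - r))))
                + ∫ s in (t₀+r)..(t+r), mv (mexp A (t + r - s)) (mv B (u (s - r))))‖ :=
              norm_add_le _ _
          _ ≤ ck * (cR * ‖x t‖) + ck * (E*(cB*mm)*r + E*(cB*Q)*δ) := by
              apply add_le_add
              · exact le_trans (norm_mv_le _ _)
                  (mul_le_mul_of_nonneg_left (norm_mv_le _ _) hck0)
              · refine le_trans (norm_mv_le _ _) (mul_le_mul_of_nonneg_left ?_ hck0)
                exact le_trans (norm_add_le _ _) (add_le_add hub1 hub2)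
      have himgne : ((fun s => ‖x s‖ + ‖u s‖) '' Set.Icc t₀ t₁).Nonempty :=
        ⟨_, Set.mem_image_of_mem _ ht₀mem⟩
      have hQmain : Q ≤ C0 * mm + C1 * (δ * Q) := by
        apply csSup_le himgne
        rintro y ⟨t, htm, rfl⟩
        have hA := claimA t htm
        have hB := claimB t htm
        show ‖x t‖ + ‖u t‖ ≤ C0 * mm + C1 * (δ * Q)
        rw [hC0def, hC1def]
        have haux1 : (0:ℝ) ≤ 1 + ck * cR := by nlinarith [mul_nonneg hck0 hcR0]
        have h1 := mul_le_mul_of_nonneg_left hA haux1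
        have h2 : (0:ℝ) ≤ (1 + ck*cR) * ((cA+cB) * ((1-δ)*mm)) :=
          mul_nonneg haux1 (mul_nonneg (add_nonneg hcA0 hcB0)
            (mul_nonneg (by linarith) hm0))
        have h3 : (0:ℝ) ≤ δ * Q := mul_nonneg hδpos.le hQ0
        linarith [h1, h2, h3, hB, hm0]
      have hQK : Q ≤ K * mm := by
        have h4 := mul_le_mul_of_nonneg_right hδC1 hQ0
        rw [hKdef]
        linarith [hQmain, h4]
      have hmono : K ^ j * S ≤ K ^ (j+1) * S :=
        mul_le_mul_of_nonneg_right
          (pow_le_pow_right₀ (by linarith) (Nat.le_succ j)) hS0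
      have hKm : K * mm = K ^ (j+1) * S := by
        rw [hmmdef, pow_succ]; ring
      constructor
      · intro s hs1 hs2
        rw [hcast] at hs2
        by_cases hcse : s ≤ t₀
        · exact le_trans (ih.1 s hs1 hcse) hmono
        · push_neg at hcse
          calc ‖u s‖ ≤ Q := hQub s ⟨hcse.le, hs2⟩
            _ ≤ K * mm := hQK
            _ = K ^ (j+1) * S := hKm
      · intro s hs1 hs2
        rw [hcast] at hs2
        by_cases hcse : s ≤ t₀
        · exact le_trans (ih.2 s hs1 hcse) hmono
        · push_neg at hcse
          calc ‖x s‖ ≤ Q := hQxb s ⟨hcse.le, hs2⟩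
            _ ≤ K * mm := hQK
            _ = K ^ (j+1) * S := hKm
  -- conclusion
  intro t ht
  set j := ⌈t / δ⌉₊ with hjdef
  have hjt : t ≤ (j:ℝ) * δ := by
    have h1 : t/δ ≤ (j:ℝ) := Nat.le_ceil _
    calc t = (t/δ)*δ := by field_simp
      _ ≤ (j:ℝ)*δ := mul_le_mul_of_nonneg_right h1 hδpos.le
  have hxb := (key j).2 t ht hjt
  have hub := (key j).1 t (by linarith) hjt
  have hKj : (K:ℝ)^j ≤ Real.exp (Real.log K / δ * t) * K := by
    have hjle : (j:ℝ) ≤ t/δ + 1 := (Nat.ceil_lt_add_one (div_nonneg ht hδpos.le)).le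
    have hlogK : 0 ≤ Real.log K := (Real.log_pos hK1).le
    have h2 : (j:ℝ) * Real.log K ≤ (t/δ + 1) * Real.log K :=
      mul_le_mul_of_nonneg_right hjle hlogK
    have h3 : (K:ℝ)^j = Real.exp ((j:ℝ) * Real.log K) := by
      rw [Real.exp_nat_mul, Real.exp_log hKpos]
    rw [h3]
    calc Real.exp ((j:ℝ) * Real.log K) ≤ Real.exp ((t/δ + 1) * Real.log K) :=
        Real.exp_le_exp.mpr h2
      _ = Real.exp (Real.log K / δ * t + Real.log K) := by congr 1; ring
      _ = Real.exp (Real.log K / δ * t) * K := by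
          rw [Real.exp_add, Real.exp_log hKpos]
  have hfinal : K^j * S ≤ Real.exp (Real.log K / δ * t) * K * S :=
    mul_le_mul_of_nonneg_right hKj hS0
  calc ‖x t‖ + ‖u t‖ ≤ K^j * S + K^j * S := add_le_add hxb hub
    _ ≤ Real.exp (Real.log K / δ * t) * K * S + Real.exp (Real.log K / δ * t) * K * S :=
        add_le_add hfinal hfinal
    _ = 2 * K * Real.exp (Real.log K / δ * t) * S := by ring
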